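/- Let ω = (ε + s)/t be an elliptic element of K̃ \ K. Then its conjugate σ(ω) = (ε^q + s)/t is also elliptic, and there exists M ∈ GL₂(A) with M·ω = σ(ω) under the Möbius action if and only if the class of J_ω = tA + (ε + s)A is 2-torsion in the ideal class group Cl(Ã), i.e. there exist nonzero a, b ∈ Ã with a·J_ω² = b·Ã. -/

import Mathlib

open Matrix Polynomial

/-- The Möbius action of a `2 × 2` matrix over `A` on elements of a field extension. -/
noncomputable def mob {A Kt : Type*} [CommRing A] [Field Kt] [Algebra A Kt]
    (M : Matrix (Fin 2) (Fin 2) A) (ω : Kt) : Kt :=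
  (algebraMap A Kt (M 0 0) * ω + algebraMap A Kt (M 0 1)) /
    (algebraMap A Kt (M 1 0) * ω + algebraMap A Kt (M 1 1))

/-- `ω ∈ K̃ \ K` is elliptic: `ω = (ε + s)/t` with `t ≠ 0` and `(ε^q + s)(ε + s) ∈ tA`. -/
def IsEll (A K Kt : Type*) [CommRing A] [Field K] [Field Kt] [Algebra A K]
    [Algebra K Kt] [Algebra A Kt] (q : ℕ) (ε ω : Kt) : Prop :=
  ω ∉ Set.range (algebraMap K Kt) ∧
    ∃ s t : A, t ≠ 0 ∧ ω = (ε + algebraMap A Kt s) / algebraMap A Kt t ∧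
      ∃ u : A, (ε ^ q + algebraMap A Kt s) * (ε + algebraMap A Kt s) =
        algebraMap A Kt t * algebraMap A Kt u

open Pointwise in
set_option maxHeartbeats 2000000 in
/-- **Theorem 2.8 (pointwise form).** For an elliptic element `ω = (ε+s)/t`, the conjugate
`σ(ω) = (ε^q+s)/t` is elliptic, and `ω` is `GL₂(A)`-equivalent to `σ(ω)` if and only if
the class of `J_ω = tA + (ε+s)A` is `2`-torsion in `Cl(Ã)`, i.e. `a·J_ω² = b·Ã` for some
nonzero `a, b ∈ Ã`. -/
theorem stmt_13 (Fq : Type*) [Field Fq] [Fintype Fq] (q : ℕ) (hq : Fintype.card Fq = q)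
    (A : Type*) [CommRing A] [IsDomain A] [IsDedekindDomain A] [Algebra Fq A]
    (K : Type*) [Field K] [Algebra A K] [IsFractionRing A K]
    (hunits : ∀ u : Aˣ, ∃ α : Fqˣ, algebraMap Fq A (α : Fq) = (u : A))
    (Kt : Type*) [Field Kt] [Algebra K Kt] [Algebra A Kt] [IsScalarTower A K Kt]
    (ε : Kt) (hε1 : ε ∉ Set.range (algebraMap K Kt)) (hε2 : ε ^ q ^ 2 = ε)
    (hε3 : ε ^ q ≠ ε) (hgen : Algebra.adjoin K {ε} = ⊤)
    (σ : Kt ≃ₐ[K] Kt) (hσ : σ ε = ε ^ q)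
    (hAt : Algebra.adjoin A {ε} = integralClosure A Kt)
    (s t : A) (ht : t ≠ 0)
    (hell : ∃ u : A, (ε ^ q + algebraMap A Kt s) * (ε + algebraMap A Kt s) =
      algebraMap A Kt t * algebraMap A Kt u)
    (ω : Kt) (hω : ω = (ε + algebraMap A Kt s) / algebraMap A Kt t) :
    -- `σ(ω) = (ε^q + s)/t` is also elliptic
    σ ω = (ε ^ q + algebraMap A Kt s) / algebraMap A Kt t ∧
    IsEll A K Kt q ε (σ ω) ∧
    -- `ω ≡ σ(ω)` iff the class of `J_ω` is `2`-torsion in `Cl(Ã)`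
    ((∃ M : GL (Fin 2) A, mob (↑M : Matrix (Fin 2) (Fin 2) A) ω = σ ω) ↔
      ∃ a b : Kt, a ∈ Algebra.adjoin A {ε} ∧ b ∈ Algebra.adjoin A {ε} ∧ a ≠ 0 ∧ b ≠ 0 ∧
        (fun x => a * x) ''
            ((Submodule.span A ({algebraMap A Kt t, ε + algebraMap A Kt s} : Set Kt) *
              Submodule.span A ({algebraMap A Kt t, ε + algebraMap A Kt s} : Set Kt) :
              Submodule A Kt) : Set Kt) =
          (fun x => b * x) '' ((Algebra.adjoin A {ε} : Subalgebra A Kt) : Set Kt)) := by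
  classical
  obtain ⟨u, hu⟩ := hell
  have hAK : ∀ x : A, algebraMap A Kt x = algebraMap K Kt (algebraMap A K x) :=
    fun x => IsScalarTower.algebraMap_apply A K Kt x
  have injK : Function.Injective (algebraMap K Kt) := (algebraMap K Kt).injective
  have injAK : Function.Injective (algebraMap A K) := IsFractionRing.injective A K
  have inj : Function.Injective (algebraMap A Kt) := by
    intro x y hxy
    rw [hAK, hAK] at hxy
    exact injAK (injK hxy)
  -- characteristic facts
  haveI : CharP Fq (ringChar Fq) := ringChar.charP Fq
  obtain ⟨n, hpp, hcard⟩ := FiniteField.card Fq (ringChar Fq)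
  set p := ringChar Fq with hpdef
  haveI : Fact p.Prime := ⟨hpp⟩
  have injF : Function.Injective ((algebraMap A Kt).comp (algebraMap Fq A)) := by
    intro x y hxy
    exact (algebraMap Fq A).injective (inj hxy)
  haveI : CharP Kt p := charP_of_injective_ringHom injF p
  have hqpn : q = p ^ (n : ℕ) := by rw [← hq, hcard]
  have hfrob : ∀ x y : Kt, (x + y) ^ q = x ^ q + y ^ q := by
    intro x y; rw [hqpn]; exact add_pow_char_pow x y p n
  have hfrobsub : ∀ x y : Kt, (x - y) ^ q = x ^ q - y ^ q := by
    intro x y; rw [hqpn]; exact sub_pow_char_pow x y n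
  have hq2 : 2 ≤ q := by rw [← hq]; exact Fintype.one_lt_card
  -- root counting
  have hroot : ∀ x : Kt, x ^ q = x → ∃ a : A, algebraMap A Kt a = x := by
    intro x hx
    by_contra hc
    push_neg at hc
    set f : Fq →+* Kt := (algebraMap A Kt).comp (algebraMap Fq A) with hfdef
    set P : Polynomial Kt := X ^ q - X with hP
    have hPq : P.natDegree = q := by
      have h1 : (X : Polynomial Kt).natDegree < (X ^ q : Polynomial Kt).natDegree := by
        rw [natDegree_X_pow, natDegree_X]; omega
      rw [hP, natDegree_sub_eq_left_of_natDegree_lt h1, natDegree_X_pow]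
    have hP0 : P ≠ 0 := by
      intro h
      rw [h, natDegree_zero] at hPq
      omega
    have hroots : ∀ y : Kt, y ^ q = y → y ∈ P.roots := by
      intro y hy
      rw [mem_roots hP0]
      simp [hP, IsRoot, hy]
    set S : Finset Kt := Finset.univ.image f with hS
    have hxS : x ∉ S := by
      intro hxg
      obtain ⟨α, _, hα⟩ := Finset.mem_image.mp hxg
      exact hc (algebraMap Fq A α) hα
    have hsub : insert x S ⊆ P.roots.toFinset := by
      intro y hy
      rw [Multiset.mem_toFinset]
      rcases Finset.mem_insert.mp hy with h | h
      · exact h ▸ hroots x hx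
      · obtain ⟨α, _, hα⟩ := Finset.mem_image.mp h
        refine hroots y ?_
        have hαq : α ^ q = α := by rw [← hq]; exact FiniteField.pow_card α
        rw [← hα, ← map_pow, hαq]
    have h1 : (insert x S).card = q + 1 := by
      rw [Finset.card_insert_of_notMem hxS, hS, Finset.card_image_of_injective _ injF,
        Finset.card_univ, hq]
    have h2 : (insert x S).card ≤ q :=
      le_trans (Finset.card_le_card hsub)
        (le_trans (Multiset.toFinset_card_le _) (le_trans (P.card_roots') (le_of_eq hPq)))
    omega
  have hεqq : (ε ^ q) ^ q = ε := by
    rw [← pow_mul, ← sq]; exact hε2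
  obtain ⟨e₀, he⟩ : ∃ a : A, algebraMap A Kt a = ε + ε ^ q := by
    refine hroot _ ?_
    rw [hfrob, hεqq]; ring
  obtain ⟨n₀, hn⟩ : ∃ a : A, algebraMap A Kt a = ε ^ q * ε := by
    refine hroot _ ?_
    rw [mul_pow, hεqq]; ring
  -- the unit δ = ε - ε^q
  have hδ0 : ε - ε ^ q ≠ 0 := sub_ne_zero.mpr (Ne.symm hε3)
  have hδq : (ε - ε ^ q) ^ q = -(ε - ε ^ q) := by
    rw [hfrobsub, hεqq]; ring
  have hδinv : (ε - ε ^ q) * (ε - ε ^ q) ^ (2 * q - 3) = 1 := by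
    have h2q : (ε - ε ^ q) ^ (2 * q) = (ε - ε ^ q) ^ 2 := by
      rw [two_mul, pow_add, hδq]; ring
    have hsplit : (2 * q) = (2 * q - 2) + 2 := by omega
    have h3 : (ε - ε ^ q) ^ (2 * q - 2) * (ε - ε ^ q) ^ 2 = 1 * (ε - ε ^ q) ^ 2 := by
      rw [← pow_add, ← hsplit, h2q, one_mul]
    have h4 : (ε - ε ^ q) ^ (2 * q - 2) = 1 := mul_right_cancel₀ (pow_ne_zero 2 hδ0) h3
    calc (ε - ε ^ q) * (ε - ε ^ q) ^ (2 * q - 3) = (ε - ε ^ q) ^ (1 + (2 * q - 3)) := by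
          rw [pow_add, pow_one]
    _ = (ε - ε ^ q) ^ (2 * q - 2) := by congr 1; omega
    _ = 1 := h4
  -- basic facts about ω
  have hTne : algebraMap A Kt t ≠ 0 := fun h => ht (inj (by rw [h, map_zero]))
  have hTω : algebraMap A Kt t * ω = ε + algebraMap A Kt s := by
    rw [hω, mul_div_cancel₀ _ hTne]
  have hωK : ω ∉ Set.range (algebraMap K Kt) := by
    rintro ⟨w, hw⟩
    apply hε1
    refine ⟨algebraMap A K t * w - algebraMap A K s, ?_⟩
    rw [map_sub, _root_.map_mul, ← hAK t, ← hAK s, hw, hTω, add_sub_cancel_right]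
  have hσA : ∀ x : A, σ (algebraMap A Kt x) = algebraMap A Kt x := fun x => by
    rw [hAK x]; exact σ.commutes _
  have hσω : σ ω = (ε ^ q + algebraMap A Kt s) / algebraMap A Kt t := by
    rw [hω, map_div₀, map_add, hσ, hσA, hσA]
  have hTσω : algebraMap A Kt t * σ ω = ε ^ q + algebraMap A Kt s := by
    rw [hσω, mul_div_cancel₀ _ hTne]
  have hσωK : σ ω ∉ Set.range (algebraMap K Kt) := by
    rintro ⟨w, hw⟩
    apply hε1
    refine ⟨algebraMap A K e₀ - (algebraMap A K t * w - algebraMap A K s), ?_⟩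
    rw [map_sub, map_sub, _root_.map_mul, ← hAK t, ← hAK s, ← hAK e₀, hw, hTσω, he]
    ring
  -- key identity in A
  have hkeyKt : algebraMap A Kt (n₀ + s * e₀ + s * s) = algebraMap A Kt (t * u) := by
    simp only [map_add, _root_.map_mul]
    linear_combination hn + algebraMap A Kt s * he + hu
  refine ⟨hσω, ⟨hσωK, -(e₀ + s), -t, neg_ne_zero.mpr ht, ?_, -u, ?_⟩, ?_⟩
  · -- σ ω = (ε + map (-(e₀+s))) / map (-t)
    have key : ε + algebraMap A Kt (-(e₀ + s)) = -(ε ^ q + algebraMap A Kt s) := by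
      simp only [map_neg, map_add]
      linear_combination -he
    rw [key, map_neg, neg_div_neg_eq, hσω]
  · -- ellipticity of σ ω
    simp only [map_neg, map_add]
    linear_combination hu + (algebraMap A Kt e₀ + 2 * algebraMap A Kt s) * he
  · -- the equivalence
    set At : Submodule A Kt := Subalgebra.toSubmodule (Algebra.adjoin A {ε}) with hAtdef
    set J : Submodule A Kt :=
      Submodule.span A ({algebraMap A Kt t, ε + algebraMap A Kt s} : Set Kt) with hJdef
    set J' : Submodule A Kt :=
      Submodule.span A ({algebraMap A Kt t, ε ^ q + algebraMap A Kt s} : Set Kt) with hJ'def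
    set L : Submodule A Kt := Submodule.span A ({(1 : Kt), ω} : Set Kt) with hLdef
    set L' : Submodule A Kt := Submodule.span A ({(1 : Kt), σ ω} : Set Kt) with hL'def
    have hmemA : ∀ x : A, algebraMap A Kt x ∈ Algebra.adjoin A {ε} :=
      fun x => Subalgebra.algebraMap_mem _ x
    have hεmem : ε ∈ Algebra.adjoin A {ε} := Algebra.subset_adjoin rfl
    have hPimem : ε + algebraMap A Kt s ∈ Algebra.adjoin A {ε} := add_mem hεmem (hmemA s)
    have hPi'mem : ε ^ q + algebraMap A Kt s ∈ Algebra.adjoin A {ε} :=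
      add_mem (pow_mem hεmem q) (hmemA s)
    have hδmem : ε - ε ^ q ∈ Algebra.adjoin A {ε} := sub_mem hεmem (pow_mem hεmem q)
    -- stability of submodules under multiplication by the order
    have hstab : ∀ M : Submodule A Kt, (∀ x ∈ M, ε * x ∈ M) →
        ∀ a ∈ Algebra.adjoin A {ε}, ∀ x ∈ M, a * x ∈ M := by
      intro M hM a ha
      induction ha using Algebra.adjoin_induction with
      | mem y hy =>
        rcases hy with rfl
        exact hM
      | algebraMap r =>
        intro x hx
        rw [← Algebra.smul_def]
        exact M.smul_mem r hx
      | add y z hy hz hy' hz' =>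
        intro x hx
        rw [add_mul]
        exact M.add_mem (hy' x hx) (hz' x hx)
      | mul y z hy hz hy' hz' =>
        intro x hx
        rw [mul_assoc]
        exact hy' _ (hz' x hx)
    -- J and J' are stable under multiplication by ε
    have hεJ : ∀ x ∈ J, ε * x ∈ J := by
      intro x hx
      induction hx using Submodule.span_induction with
      | mem y hy =>
        simp only [Set.mem_insert_iff, Set.mem_singleton_iff] at hy
        rcases hy with rfl | rfl
        · have hid : ε * algebraMap A Kt t =
              t • (ε + algebraMap A Kt s) - s • algebraMap A Kt t := by
            simp only [Algebra.smul_def]; ring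
          rw [hid]
          exact sub_mem (Submodule.smul_mem _ _ (Submodule.subset_span (by simp)))
            (Submodule.smul_mem _ _ (Submodule.subset_span (by simp)))
        · have hid : ε * (ε + algebraMap A Kt s) =
              (e₀ + s) • (ε + algebraMap A Kt s) - u • algebraMap A Kt t := by
            simp only [Algebra.smul_def, map_add]
            linear_combination (-(ε + algebraMap A Kt s)) * he - hu
          rw [hid]
          exact sub_mem (Submodule.smul_mem _ _ (Submodule.subset_span (by simp)))
            (Submodule.smul_mem _ _ (Submodule.subset_span (by simp)))
      | zero => simpa using (Submodule.zero_mem J)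
      | add y z hy hz hy' hz' =>
        rw [mul_add]
        exact add_mem hy' hz'
      | smul r y hy hy' =>
        rw [mul_smul_comm]
        exact Submodule.smul_mem _ _ hy'
    have hεJ' : ∀ x ∈ J', ε * x ∈ J' := by
      intro x hx
      induction hx using Submodule.span_induction with
      | mem y hy =>
        simp only [Set.mem_insert_iff, Set.mem_singleton_iff] at hy
        rcases hy with rfl | rfl
        · have hid : ε * algebraMap A Kt t =
              (e₀ + s) • algebraMap A Kt t - t • (ε ^ q + algebraMap A Kt s) := by
            simp only [Algebra.smul_def, map_add]
            linear_combination (-(algebraMap A Kt t)) * he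
          rw [hid]
          exact sub_mem (Submodule.smul_mem _ _ (Submodule.subset_span (by simp)))
            (Submodule.smul_mem _ _ (Submodule.subset_span (by simp)))
        · have hid : ε * (ε ^ q + algebraMap A Kt s) =
              u • algebraMap A Kt t - s • (ε ^ q + algebraMap A Kt s) := by
            simp only [Algebra.smul_def, map_add]
            linear_combination hu
          rw [hid]
          exact sub_mem (Submodule.smul_mem _ _ (Submodule.subset_span (by simp)))
            (Submodule.smul_mem _ _ (Submodule.subset_span (by simp)))
      | zero => simpa using (Submodule.zero_mem J')
      | add y z hy hz hy' hz' =>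
        rw [mul_add]
        exact add_mem hy' hz'
      | smul r y hy hy' =>
        rw [mul_smul_comm]
        exact Submodule.smul_mem _ _ hy'
    have hstabJJ : ∀ y ∈ J * J', ε * y ∈ J * J' := by
      intro y hy
      refine Submodule.mul_induction_on hy ?_ ?_
      · intro m hm n hn
        rw [← mul_assoc]
        exact Submodule.mul_mem_mul (hεJ m hm) hn
      · intro x y hx hy
        rw [mul_add]
        exact add_mem hx hy
    -- the key norm computation : J * J' = t • Ã
    have hJJ' : J * J' = (algebraMap A Kt t) • At := by
      apply le_antisymm
      · rw [hJdef, hJ'def, Submodule.span_mul_span, Submodule.span_le]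
        rintro z hz
        rw [Set.mem_mul] at hz
        obtain ⟨x, hx, y, hy, rfl⟩ := hz
        simp only [Set.mem_insert_iff, Set.mem_singleton_iff] at hx hy
        have hsm : ∀ w ∈ Algebra.adjoin A {ε},
            algebraMap A Kt t * w ∈ (algebraMap A Kt t) • At := by
          intro w hw
          have := Submodule.smul_mem_pointwise_smul w (algebraMap A Kt t) At
            ((Subalgebra.mem_toSubmodule _).mpr hw)
          simpa [smul_eq_mul] using this
        rcases hx with rfl | rfl <;> rcases hy with rfl | rfl
        · exact SetLike.mem_coe.mpr (hsm _ (hmemA t))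
        · exact SetLike.mem_coe.mpr (hsm _ hPi'mem)
        · refine SetLike.mem_coe.mpr ?_
          rw [mul_comm]
          exact hsm _ hPimem
        · refine SetLike.mem_coe.mpr ?_
          have heq : (ε + algebraMap A Kt s) * (ε ^ q + algebraMap A Kt s) =
              algebraMap A Kt t * algebraMap A Kt u := by
            rw [mul_comm]; exact hu
          rw [heq]
          exact hsm _ (hmemA u)
      · intro z hz
        rw [← SetLike.mem_coe, Submodule.coe_pointwise_smul] at hz
        obtain ⟨x, hx, rfl⟩ := Set.mem_smul_set.mp hz
        have hTJJ : algebraMap A Kt t ∈ J * J' := by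
          have hA : (ε + algebraMap A Kt s) * algebraMap A Kt t ∈ J * J' :=
            Submodule.mul_mem_mul (Submodule.subset_span (by simp))
              (Submodule.subset_span (by simp))
          have hB : algebraMap A Kt t * (ε ^ q + algebraMap A Kt s) ∈ J * J' :=
            Submodule.mul_mem_mul (Submodule.subset_span (by simp))
              (Submodule.subset_span (by simp))
          have hTδ : algebraMap A Kt t * (ε - ε ^ q) ∈ J * J' := by
            have hid : algebraMap A Kt t * (ε - ε ^ q) =
                (ε + algebraMap A Kt s) * algebraMap A Kt t -
                  algebraMap A Kt t * (ε ^ q + algebraMap A Kt s) := by ring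
            rw [hid]
            exact sub_mem hA hB
          have hmem := hstab (J * J') hstabJJ ((ε - ε ^ q) ^ (2 * q - 3))
            (pow_mem hδmem _) _ hTδ
          have heq : (ε - ε ^ q) ^ (2 * q - 3) * (algebraMap A Kt t * (ε - ε ^ q)) =
              algebraMap A Kt t := by
            linear_combination (algebraMap A Kt t) * hδinv
          rwa [heq] at hmem
        have hx' : x ∈ Algebra.adjoin A {ε} := hx
        have hfin := hstab (J * J') hstabJJ x hx' _ hTJJ
        have heq2 : algebraMap A Kt t • x = x * algebraMap A Kt t := by
          rw [smul_eq_mul, mul_comm]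
        rw [heq2]
        exact hfin
    -- the lattices of ω and σ ω
    have hL : (algebraMap A Kt t) • L = J := by
      rw [hLdef, Submodule.smul_span]
      congr 1
      rw [Set.smul_set_insert, Set.smul_set_singleton, smul_eq_mul, smul_eq_mul, mul_one, hTω]
    have hL' : (algebraMap A Kt t) • L' = J' := by
      rw [hL'def, Submodule.smul_span]
      congr 1
      rw [Set.smul_set_insert, Set.smul_set_singleton, smul_eq_mul, smul_eq_mul, mul_one, hTσω]
    -- linear independence of 1, ω over A
    have LI : ∀ x y x' y' : A,
        algebraMap A Kt x * ω + algebraMap A Kt y =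
          algebraMap A Kt x' * ω + algebraMap A Kt y' → x = x' ∧ y = y' := by
      intro x y x' y' hxy
      have hx : x = x' := by
        by_contra hne
        apply hωK
        have hsub : algebraMap A Kt (x - x') * ω = algebraMap A Kt (y' - y) := by
          simp only [map_sub]
          linear_combination hxy
        have hne2 : algebraMap A Kt (x - x') ≠ 0 := by
          intro h
          exact hne (sub_eq_zero.mp (inj (by rw [h, map_zero])))
        refine ⟨algebraMap A K (y' - y) / algebraMap A K (x - x'), ?_⟩
        rw [map_div₀, ← hAK, ← hAK, div_eq_iff hne2]
        linear_combination -hsub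
      refine ⟨hx, ?_⟩
      rw [hx] at hxy
      exact inj (add_left_cancel hxy)
    -- representation of elements of Kt
    have hε2' : ε * ε = algebraMap K Kt (algebraMap A K e₀) * ε -
        algebraMap K Kt (algebraMap A K n₀) := by
      rw [← hAK, ← hAK]
      linear_combination (-ε) * he + hn
    have hrep : ∀ x : Kt, ∃ y z : K, x = algebraMap K Kt y + algebraMap K Kt z * ε := by
      intro x
      have hx : x ∈ Algebra.adjoin K {ε} := by rw [hgen]; trivial
      induction hx using Algebra.adjoin_induction with
      | mem y hy =>
        rcases hy with rfl
        exact ⟨0, 1, by simp⟩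
      | algebraMap r => exact ⟨r, 0, by simp⟩
      | add y z hy hz hy' hz' =>
        obtain ⟨y1, z1, h1⟩ := hy'
        obtain ⟨y2, z2, h2⟩ := hz'
        refine ⟨y1 + y2, z1 + z2, ?_⟩
        rw [h1, h2, map_add, map_add]
        ring
      | mul y z hy hz hy' hz' =>
        obtain ⟨y1, z1, h1⟩ := hy'
        obtain ⟨y2, z2, h2⟩ := hz'
        refine ⟨y1 * y2 - z1 * z2 * algebraMap A K n₀,
          y1 * z2 + z1 * y2 + z1 * z2 * algebraMap A K e₀, ?_⟩
        rw [h1, h2]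
        simp only [map_add, map_sub, _root_.map_mul]
        linear_combination (algebraMap K Kt z1 * algebraMap K Kt z2) * hε2'
    -- coercion of pointwise smul
    have coeEq : ∀ (x : Kt) (S : Submodule A Kt),
        ((x • S : Submodule A Kt) : Set Kt) = (fun y => x * y) '' (S : Set Kt) := by
      intro x S
      rw [Submodule.coe_pointwise_smul]
      ext z
      simp [Set.mem_smul_set]
    have smulMul : ∀ (x : Kt) (M N : Submodule A Kt), (x • M) * N = x • (M * N) := by
      intro x M N
      rw [← Submodule.span_singleton_mul, ← Submodule.span_singleton_mul, mul_assoc]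
    have smulCancel : ∀ (x y : Kt) (M N : Submodule A Kt), x ≠ 0 → x • M = y • N →
        M = (x⁻¹ * y) • N := by
      intro x y M N hx h
      calc M = (1 : Kt) • M := (one_smul _ _).symm
      _ = (x⁻¹ * x) • M := by rw [inv_mul_cancel₀ hx]
      _ = x⁻¹ • (x • M) := (smul_smul _ _ _).symm
      _ = x⁻¹ • (y • N) := by rw [h]
      _ = (x⁻¹ * y) • N := smul_smul _ _ _
    have hAtJ : At * J = J := by
      apply le_antisymm
      · rw [Submodule.mul_le]
        intro m hm x hx
        exact hstab J hεJ m ((Subalgebra.mem_toSubmodule _).mp hm) x hx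
      · intro x hx
        have := Submodule.mul_mem_mul (show (1 : Kt) ∈ At from (Subalgebra.mem_toSubmodule _).mpr (one_mem _)) hx
        rwa [one_mul] at this
    have hAtJ' : J' * At = J' := by
      rw [mul_comm]
      apply le_antisymm
      · rw [Submodule.mul_le]
        intro m hm x hx
        exact hstab J' hεJ' m ((Subalgebra.mem_toSubmodule _).mp hm) x hx
      · intro x hx
        have := Submodule.mul_mem_mul (show (1 : Kt) ∈ At from (Subalgebra.mem_toSubmodule _).mpr (one_mem _)) hx
        rwa [one_mul] at this
    constructor
    · -- GL₂-equivalence implies 2-torsion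
      rintro ⟨M, hM⟩
      set a := (M : Matrix (Fin 2) (Fin 2) A) 0 0 with hadef
      set b := (M : Matrix (Fin 2) (Fin 2) A) 0 1 with hbdef
      set c := (M : Matrix (Fin 2) (Fin 2) A) 1 0 with hcdef
      set d := (M : Matrix (Fin 2) (Fin 2) A) 1 1 with hddef
      have hdet : IsUnit ((M : Matrix (Fin 2) (Fin 2) A).det) :=
        (Matrix.isUnit_iff_isUnit_det _).mp M.isUnit
      rw [Matrix.det_fin_two] at hdet
      obtain ⟨Du, hDu⟩ := hdet
      have hDv : (↑Du⁻¹ : A) * (a * d - b * c) = 1 := by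
        rw [← hDu]
        exact Du.inv_mul
      set Dv := (↑Du⁻¹ : A) with hDvdef
      have hlam0 : algebraMap A Kt c * ω + algebraMap A Kt d ≠ 0 := by
        intro h0
        have hc0 : c = 0 := by
          by_contra hcne
          apply hωK
          have hmc : algebraMap A Kt c ≠ 0 := fun h => hcne (inj (by rw [h, map_zero]))
          refine ⟨algebraMap A K (-d) / algebraMap A K c, ?_⟩
          rw [map_div₀, ← hAK, ← hAK, div_eq_iff hmc, map_neg]
          linear_combination -h0
        have hd0 : d = 0 := by
          apply inj
          rw [map_zero]
          rw [hc0, map_zero, zero_mul, zero_add] at h0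
          exact h0
        rw [hc0, hd0] at hDv
        simp at hDv
      have hM' : algebraMap A Kt a * ω + algebraMap A Kt b =
          σ ω * (algebraMap A Kt c * ω + algebraMap A Kt d) := by
        rw [mob] at hM
        rw [div_eq_iff hlam0] at hM
        linear_combination hM
      set lam := algebraMap A Kt c * ω + algebraMap A Kt d with hlamdef
      have hlamL : lam • L' = L := by
        have e1 : lam • L' = Submodule.span A
            ({lam, algebraMap A Kt a * ω + algebraMap A Kt b} : Set Kt) := by
          rw [hL'def, Submodule.smul_span]
          congr 1
          rw [Set.smul_set_insert, Set.smul_set_singleton, smul_eq_mul, smul_eq_mul, mul_one,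
            mul_comm lam (σ ω), ← hM']
        rw [e1, hLdef]
        have hDmap : algebraMap A Kt Dv *
            (algebraMap A Kt a * algebraMap A Kt d -
              algebraMap A Kt b * algebraMap A Kt c) = 1 := by
          rw [← _root_.map_mul, ← _root_.map_mul, ← map_sub, ← _root_.map_mul, hDv, _root_.map_one]
        apply le_antisymm
        · apply Submodule.span_le.mpr
          rw [Set.insert_subset_iff, Set.singleton_subset_iff]
          constructor
          · refine SetLike.mem_coe.mpr (Submodule.mem_span_pair.mpr ⟨d, c, ?_⟩)
            simp only [Algebra.smul_def, smul_eq_mul, mul_one]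
            rw [hlamdef]; ring
          · refine SetLike.mem_coe.mpr (Submodule.mem_span_pair.mpr ⟨b, a, ?_⟩)
            simp only [Algebra.smul_def, smul_eq_mul, mul_one]
            ring
        · apply Submodule.span_le.mpr
          rw [Set.insert_subset_iff, Set.singleton_subset_iff]
          constructor
          · refine SetLike.mem_coe.mpr (Submodule.mem_span_pair.mpr
              ⟨Dv * a, -(Dv * c), ?_⟩)
            simp only [Algebra.smul_def, _root_.map_mul, map_neg, hlamdef]
            linear_combination hDmap
          · refine SetLike.mem_coe.mpr (Submodule.mem_span_pair.mpr
              ⟨-(Dv * b), Dv * d, ?_⟩)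
            simp only [Algebra.smul_def, _root_.map_mul, map_neg, hlamdef]
            linear_combination ω * hDmap
      have hlamne : lam ≠ 0 := hlam0
      have hJlam : J = lam • J' := by
        rw [← hL, ← hL', ← hlamL, smul_smul, smul_smul, mul_comm]
      have hJJeq : J * J = (lam * algebraMap A Kt t) • At := by
        calc J * J = (lam • J') * J := by rw [← hJlam]
        _ = lam • (J' * J) := smulMul _ _ _
        _ = lam • (J * J') := by rw [mul_comm J' J]
        _ = lam • ((algebraMap A Kt t) • At) := by rw [hJJ']
        _ = (lam * algebraMap A Kt t) • At := smul_smul _ _ _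
      obtain ⟨y, z, hyz⟩ := hrep (lam * algebraMap A Kt t)
      obtain ⟨y1, y2, hy2mem, hy⟩ := IsFractionRing.div_surjective (A := A) y
      obtain ⟨z1, z2, hz2mem, hz⟩ := IsFractionRing.div_surjective (A := A) z
      have hy20 : y2 ≠ 0 := mem_nonZeroDivisors_iff_ne_zero.mp hy2mem
      have hz20 : z2 ≠ 0 := mem_nonZeroDivisors_iff_ne_zero.mp hz2mem
      have hy2K : algebraMap A K y2 ≠ 0 := fun h => hy20 (injAK (by rw [h, map_zero]))
      have hz2K : algebraMap A K z2 ≠ 0 := fun h => hz20 (injAK (by rw [h, map_zero]))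
      have hyK : algebraMap A K (y2 * z2) * y = algebraMap A K (z2 * y1) := by
        rw [_root_.map_mul, _root_.map_mul, ← hy]
        field_simp
      have hzK : algebraMap A K (y2 * z2) * z = algebraMap A K (y2 * z1) := by
        rw [_root_.map_mul, _root_.map_mul, ← hz]
        field_simp
      have hb' : algebraMap A Kt (y2 * z2) * (lam * algebraMap A Kt t) =
          algebraMap A Kt (z2 * y1) + algebraMap A Kt (y2 * z1) * ε := by
        rw [hyz, hAK (y2 * z2), hAK (z2 * y1), hAK (y2 * z1)]
        have hdist : algebraMap K Kt (algebraMap A K (y2 * z2)) *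
            (algebraMap K Kt y + algebraMap K Kt z * ε) =
            algebraMap K Kt (algebraMap A K (y2 * z2) * y) +
              algebraMap K Kt (algebraMap A K (y2 * z2) * z) * ε := by
          simp only [_root_.map_mul]
          ring
        rw [hdist, hyK, hzK]
      have hane : algebraMap A Kt (y2 * z2) ≠ 0 := by
        intro h
        exact (mul_ne_zero hy20 hz20) (inj (by rw [h, map_zero]))
      have hlamT : lam * algebraMap A Kt t ≠ 0 := mul_ne_zero hlamne hTne
      refine ⟨algebraMap A Kt (y2 * z2),
        algebraMap A Kt (z2 * y1) + algebraMap A Kt (y2 * z1) * ε,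
        hmemA _, add_mem (hmemA _) (mul_mem (hmemA _) hεmem), hane, ?_, ?_⟩
      · rw [← hb']
        exact mul_ne_zero hane hlamT
      · have hfinal : (algebraMap A Kt (y2 * z2)) • (J * J) =
            (algebraMap A Kt (z2 * y1) + algebraMap A Kt (y2 * z1) * ε) • At := by
          rw [hJJeq, smul_smul, hb']
        have := congrArg (fun S : Submodule A Kt => (S : Set Kt)) hfinal
        simp only [coeEq] at this
        rw [hAtdef, Subalgebra.coe_toSubmodule] at this
        exact this
    · -- 2-torsion implies GL₂-equivalence
      rintro ⟨a, b, haA, hbA, ha0, hb0, hset⟩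
      have hsub : a • (J * J) = b • At := by
        apply SetLike.coe_injective
        rw [coeEq, coeEq, hAtdef, Subalgebra.coe_toSubmodule]
        exact hset
      have hmulJ' := congrArg (fun S : Submodule A Kt => J' * S) hsub
      have hleft : J' * (a • (J * J)) = (a * algebraMap A Kt t) • J := by
        calc J' * (a • (J * J)) = (a • (J * J)) * J' := mul_comm _ _
        _ = a • ((J * J) * J') := smulMul _ _ _
        _ = a • (J * (J * J')) := by rw [mul_assoc]
        _ = a • (J * ((algebraMap A Kt t) • At)) := by rw [hJJ']
        _ = a • (((algebraMap A Kt t) • At) * J) := by rw [mul_comm J]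
        _ = a • ((algebraMap A Kt t) • (At * J)) := by rw [smulMul]
        _ = a • ((algebraMap A Kt t) • J) := by rw [hAtJ]
        _ = (a * algebraMap A Kt t) • J := smul_smul _ _ _
      have hright : J' * (b • At) = b • J' := by
        calc J' * (b • At) = (b • At) * J' := mul_comm _ _
        _ = b • (At * J') := smulMul _ _ _
        _ = b • (J' * At) := by rw [mul_comm At J']
        _ = b • J' := by rw [hAtJ']
      have hmain : (a * algebraMap A Kt t) • J = b • J' := by
        rw [← hleft, ← hright, hmulJ']
      -- descend to the lattices L and L'
      have hmain2 : (a * algebraMap A Kt t * algebraMap A Kt t) • L =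
          (b * algebraMap A Kt t) • L' := by
        rw [← hL, ← hL'] at hmain
        rw [smul_smul, smul_smul] at hmain
        exact hmain
      have hATT : a * algebraMap A Kt t * algebraMap A Kt t ≠ 0 :=
        mul_ne_zero (mul_ne_zero ha0 hTne) hTne
      have hbT : b * algebraMap A Kt t ≠ 0 := mul_ne_zero hb0 hTne
      set μ := (a * algebraMap A Kt t * algebraMap A Kt t)⁻¹ *
        (b * algebraMap A Kt t) with hμdef
      have hμ0 : μ ≠ 0 := mul_ne_zero (inv_ne_zero hATT) hbT
      have hLL' : L = μ • L' := smulCancel _ _ _ _ hATT hmain2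
      have h1L' : (1 : Kt) ∈ L' := Submodule.subset_span (by simp)
      have hσωL' : σ ω ∈ L' := Submodule.subset_span (by simp)
      have hμmemL : μ ∈ L := by
        rw [hLL']
        have := Submodule.smul_mem_pointwise_smul (1 : Kt) μ L' h1L'
        simpa [smul_eq_mul] using this
      have hμσω : μ * σ ω ∈ L := by
        rw [hLL']
        have := Submodule.smul_mem_pointwise_smul (σ ω) μ L' hσωL'
        simpa [smul_eq_mul] using this
      obtain ⟨d₁, c₁, hdc⟩ := Submodule.mem_span_pair.mp hμmemL
      obtain ⟨b₁, a₁, hba⟩ := Submodule.mem_span_pair.mp hμσω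
      simp only [Algebra.smul_def, smul_eq_mul, mul_one] at hdc hba
      -- the reverse inclusions
      have hOmem : ω ∈ μ • L' := by
        rw [← hLL']
        exact Submodule.subset_span (by simp)
      have h1mem : (1 : Kt) ∈ μ • L' := by
        rw [← hLL']
        exact Submodule.subset_span (by simp)
      rw [← SetLike.mem_coe, Submodule.coe_pointwise_smul] at hOmem h1mem
      obtain ⟨yω, hyωL', hyω⟩ := Set.mem_smul_set.mp hOmem
      obtain ⟨y1', hy1L', hy1⟩ := Set.mem_smul_set.mp h1mem
      obtain ⟨b₂, a₂, hba2⟩ := Submodule.mem_span_pair.mp hyωL'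
      obtain ⟨d₂, c₂, hdc2⟩ := Submodule.mem_span_pair.mp hy1L'
      simp only [Algebra.smul_def, smul_eq_mul, mul_one] at hba2 hdc2
      rw [smul_eq_mul] at hyω hy1
      -- derive the four matrix identities
      have hωeq : algebraMap A Kt (a₂ * a₁ + b₂ * c₁) * ω +
          algebraMap A Kt (a₂ * b₁ + b₂ * d₁) =
          algebraMap A Kt 1 * ω + algebraMap A Kt 0 := by
        simp only [map_add, _root_.map_mul, _root_.map_one, _root_.map_zero]
        rw [← hba2] at hyω
        linear_combination hyω + algebraMap A Kt a₂ * hba + algebraMap A Kt b₂ * hdc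
      have h1eq : algebraMap A Kt (c₂ * a₁ + d₂ * c₁) * ω +
          algebraMap A Kt (c₂ * b₁ + d₂ * d₁) =
          algebraMap A Kt 0 * ω + algebraMap A Kt 1 := by
        simp only [map_add, _root_.map_mul, _root_.map_one, _root_.map_zero]
        rw [← hdc2] at hy1
        linear_combination hy1 + algebraMap A Kt c₂ * hba + algebraMap A Kt d₂ * hdc
      obtain ⟨i1, i2⟩ := LI _ _ _ _ hωeq
      obtain ⟨i3, i4⟩ := LI _ _ _ _ h1eq
      -- build the matrix
      have hNM : (!![a₂, b₂; c₂, d₂] : Matrix (Fin 2) (Fin 2) A) * !![a₁, b₁; c₁, d₁] = 1 := by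
        ext i j
        fin_cases i <;> fin_cases j <;>
          simp [Matrix.mul_apply, Fin.sum_univ_two, i1, i2, i3, i4]
      have hunit : IsUnit (!![a₁, b₁; c₁, d₁] : Matrix (Fin 2) (Fin 2) A) :=
        (Matrix.isUnit_iff_isUnit_det _).mpr (Matrix.isUnit_det_of_left_inverse hNM)
      obtain ⟨U, hU⟩ := hunit
      refine ⟨U, ?_⟩
      have hUentries : (U : Matrix (Fin 2) (Fin 2) A) = !![a₁, b₁; c₁, d₁] := hU
      rw [mob, hUentries]
      show (algebraMap A Kt a₁ * ω + algebraMap A Kt b₁) /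
          (algebraMap A Kt c₁ * ω + algebraMap A Kt d₁) = σ ω
      have hnum : algebraMap A Kt a₁ * ω + algebraMap A Kt b₁ = μ * σ ω := by
        linear_combination hba
      have hden : algebraMap A Kt c₁ * ω + algebraMap A Kt d₁ = μ := by
        linear_combination hdc
      rw [hnum, hden, mul_div_cancel_left₀ _ hμ0]
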